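/- Let t ∈ ℕ, ω ∈ ℕ, and B ∈ ℕ. Suppose that every finite simple graph H with clique number at most ω that admits, under some linear ordering of its vertices, a (4t+4)-almost mixed-free adjacency matrix satisfies χ(H) ≤ B. Then every finite simple graph G with twin-width at most t and clique number at most ω satisfies χ(G) ≤ B. -/

import Mathlib

set_option maxHeartbeats 1000000


namespace TwPaper


/-- A `{0,1}`-matrix with `m` rows and `n` columns, entries modeled as `Bool`. -/
abbrev BMatrix (m n : ℕ) := Matrix (Fin m) (Fin n) Bool

/-- The submatrix of `M` given by rows `R` and columns `C` is horizontal: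
all its rows are constant. -/
def Horizontal {m n : ℕ} (M : BMatrix m n) (R : Set (Fin m)) (C : Set (Fin n)) : Prop :=
  ∀ i ∈ R, ∀ j ∈ C, ∀ j' ∈ C, M i j = M i j'

/-- The submatrix of `M` given by rows `R` and columns `C` is vertical:
all its columns are constant. -/
def Vertical {m n : ℕ} (M : BMatrix m n) (R : Set (Fin m)) (C : Set (Fin n)) : Prop :=
  ∀ j ∈ C, ∀ i ∈ R, ∀ i' ∈ R, M i j = M i' j

/-- The submatrix of `M` given by rows `R` and columns `C` is mixed:
neither horizontal nor vertical. -/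
def Mixed {m n : ℕ} (M : BMatrix m n) (R : Set (Fin m)) (C : Set (Fin n)) : Prop :=
  ¬ Horizontal M R C ∧ ¬ Vertical M R C

/-- The submatrix of `M` given by rows `R` and columns `C` is constant `0`. -/
def ConstantZero {m n : ℕ} (M : BMatrix m n) (R : Set (Fin m)) (C : Set (Fin n)) : Prop :=
  ∀ i ∈ R, ∀ j ∈ C, M i j = false

/-- A `d`-division of an `m × n` matrix: a partition of the rows into `d` contiguous
nonempty blocks, and likewise for columns.  It is encoded by the monotone surjective
maps sending a row (resp. column) to the index of its block. -/
structure Division (m n d : ℕ) where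
  row : Fin m → Fin d
  col : Fin n → Fin d
  row_mono : Monotone row
  col_mono : Monotone col
  row_surj : Function.Surjective row
  col_surj : Function.Surjective col

/-- The `i`-th row block of a division. -/
def Division.rowBlock {m n d : ℕ} (D : Division m n d) (i : Fin d) : Set (Fin m) :=
  {a | D.row a = i}

/-- The `j`-th column block of a division. -/
def Division.colBlock {m n d : ℕ} (D : Division m n d) (j : Fin d) : Set (Fin n) :=
  {b | D.col b = j}

/-- The zone `D[i,j]` of the division `D` of `M` is mixed. -/
def Division.ZoneMixed {m n d : ℕ} (D : Division m n d) (M : BMatrix m n) (i j : Fin d) : Prop :=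
  Mixed M (D.rowBlock i) (D.colBlock j)

/-- A `d`-division is a `d`-almost mixed minor if every off-diagonal zone is mixed. -/
def IsAlmostMixedMinor {m n d : ℕ} (M : BMatrix m n) (D : Division m n d) : Prop :=
  ∀ i j : Fin d, i ≠ j → D.ZoneMixed M i j

/-- A `d`-division is a `d`-mixed minor if every zone is mixed. -/
def IsMixedMinor {m n d : ℕ} (M : BMatrix m n) (D : Division m n d) : Prop :=
  ∀ i j : Fin d, D.ZoneMixed M i j

/-- `M` is `d`-almost mixed-free: it has no `d`-almost mixed minor. -/
def AlmostMixedFree {m n : ℕ} (d : ℕ) (M : BMatrix m n) : Prop :=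
  ¬ ∃ D : Division m n d, IsAlmostMixedMinor M D

/-- `M` is `d`-mixed-free: it has no `d`-mixed minor. -/
def MixedFree {m n : ℕ} (d : ℕ) (M : BMatrix m n) : Prop :=
  ¬ ∃ D : Division m n d, IsMixedMinor M D

/-- A graphic matrix: symmetric with zero diagonal. -/
def Graphic {n : ℕ} (M : BMatrix n n) : Prop :=
  (∀ i j, M i j = M j i) ∧ (∀ i, M i i = false)

/-- A division of a square matrix is symmetric if rows and columns are
partitioned in exactly the same way. -/
def Division.Symm {n d : ℕ} (D : Division n n d) : Prop := D.row = D.col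

/-- `L` is a coarsening of `D`: every row (resp. column) block of `L` is a union of
consecutive row (resp. column) blocks of `D`. -/
def Coarsens {m n d e : ℕ} (L : Division m n e) (D : Division m n d) : Prop :=
  (∀ a a' : Fin m, D.row a = D.row a' → L.row a = L.row a') ∧
  (∀ b b' : Fin n, D.col b = D.col b' → L.col b = L.col b')

/-- The zone is horizontal and not constant `0`. -/
def HorizNonzero {m n : ℕ} (M : BMatrix m n) (R : Set (Fin m)) (C : Set (Fin n)) : Prop :=
  Horizontal M R C ∧ ¬ ConstantZero M R C

/-- The zone is vertical and not constant `0`. -/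
def VertNonzero {m n : ℕ} (M : BMatrix m n) (R : Set (Fin m)) (C : Set (Fin n)) : Prop :=
  Vertical M R C ∧ ¬ ConstantZero M R C

/-- The horizontal compression `G^H_D` of a graphic matrix `M` along a symmetric
division `D` with `s` blocks: vertices are the blocks, and `i j` (for `i < j`) are
adjacent iff the zone `D[i,j]` is horizontal and not constant `0`. -/
def horizCompression {n s : ℕ} (M : BMatrix n n) (D : Division n n s) : SimpleGraph (Fin s) :=
  SimpleGraph.fromRel (fun i j => i < j ∧ HorizNonzero M (D.rowBlock i) (D.colBlock j))

/-- The vertical compression `G^V_D`. -/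
def vertCompression {n s : ℕ} (M : BMatrix n n) (D : Division n n s) : SimpleGraph (Fin s) :=
  SimpleGraph.fromRel (fun i j => i < j ∧ VertNonzero M (D.rowBlock i) (D.colBlock j))

/-- The mixed compression `G^M_D`: `i ≠ j` are adjacent iff the zone `D[i,j]` is mixed. -/
def mixedCompression {n s : ℕ} (M : BMatrix n n) (D : Division n n s) : SimpleGraph (Fin s) :=
  SimpleGraph.fromRel (fun i j => D.ZoneMixed M i j)

open Classical in
/-- The adjacency matrix of a graph on `Fin s`, rows and columns in the natural order. -/
noncomputable def graphMatrix {s : ℕ} (G : SimpleGraph (Fin s)) : BMatrix s s :=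
  fun i j => if G.Adj i j then true else false

open Classical in
/-- The adjacency matrix of `G` under the vertex ordering given by the
enumeration `e` of its vertices. -/
noncomputable def adjMatrix {V : Type*} [Fintype V] (G : SimpleGraph V)
    (e : Fin (Fintype.card V) ≃ V) : BMatrix (Fintype.card V) (Fintype.card V) :=
  fun i j => if G.Adj (e i) (e j) then true else false

/-- `G` admits, under some linear ordering of its vertices, a `d`-almost mixed-free
adjacency matrix. -/
def AdmitsAMFree {V : Type*} [Fintype V] (d : ℕ) (G : SimpleGraph V) : Prop :=
  ∃ e : Fin (Fintype.card V) ≃ V, AlmostMixedFree d (adjMatrix G e)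



/-- The pair of vertex sets `A`, `B` is impure: neither complete nor anticomplete. -/
def ImpurePair {V : Type*} (G : SimpleGraph V) (A B : Finset V) : Prop :=
  ¬ ((∀ a ∈ A, ∀ b ∈ B, G.Adj a b) ∨ (∀ a ∈ A, ∀ b ∈ B, ¬ G.Adj a b))

/-- `P` is a contraction sequence of a graph on vertex set `V`:
`P 0` is the partition into singletons, the last partition has a single part
(all of `V`), and each partition is obtained from the previous one by merging
two distinct parts. -/
def IsContractionSeq {V : Type*} [Fintype V] [DecidableEq V] {n : ℕ}
    (P : Fin n → Finpartition (Finset.univ : Finset V)) : Prop :=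
  n = Fintype.card V ∧
  (∀ h : 0 < n, (P ⟨0, h⟩).parts = Finset.univ.image (fun v => ({v} : Finset V))) ∧
  (∀ h : 0 < n, (P ⟨n - 1, by omega⟩).parts = {(Finset.univ : Finset V)}) ∧
  (∀ i : ℕ, ∀ h : i + 1 < n,
    ∃ A B : Finset V, A ∈ (P ⟨i, by omega⟩).parts ∧ B ∈ (P ⟨i, by omega⟩).parts ∧ A ≠ B ∧
      (P ⟨i + 1, h⟩).parts = insert (A ∪ B) ((((P ⟨i, by omega⟩).parts).erase A).erase B))

/-- The contraction sequence `P` has width at most `t`: for every `i` and every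
part `A` of `P i`, at most `t` other parts of `P i` form an impure pair with `A`. -/
def SeqWidthLE {V : Type*} [Fintype V] [DecidableEq V] (G : SimpleGraph V) {n : ℕ}
    (P : Fin n → Finpartition (Finset.univ : Finset V)) (t : ℕ) : Prop :=
  ∀ i : Fin n, ∀ A ∈ (P i).parts,
    ({B : Finset V | B ∈ (P i).parts ∧ B ≠ A ∧ ImpurePair G A B}).ncard ≤ t

/-- The twin-width of `G` is at most `t`: some contraction sequence of `G`
has width at most `t`. -/
def TwinWidthLE {V : Type*} [Fintype V] [DecidableEq V] (G : SimpleGraph V) (t : ℕ) : Prop :=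
  ∃ P : Fin (Fintype.card V) → Finpartition (Finset.univ : Finset V),
    IsContractionSeq P ∧ SeqWidthLE G P t



section AuxA


variable {V : Type*} [Fintype V] [DecidableEq V] {n : ℕ}
  {P : Fin n → Finpartition (Finset.univ : Finset V)}

lemma part_subset_succ (hCS : IsContractionSeq P) {l : ℕ} (hl : l + 1 < n) (v : V) :
    (P ⟨l, by omega⟩).part v ⊆ (P ⟨l + 1, hl⟩).part v := by
  obtain ⟨A, B, hA, hB, hAB, hparts⟩ := hCS.2.2.2 l hl
  set Q := (P ⟨l, by omega⟩).part v with hQ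
  have hQmem : Q ∈ (P ⟨l, by omega⟩).parts := (Finpartition.part_mem _).2 (Finset.mem_univ v)
  have hvQ : v ∈ Q := Finpartition.mem_part _ (Finset.mem_univ v)
  by_cases h1 : Q = A
  · have hmem : A ∪ B ∈ (P ⟨l + 1, hl⟩).parts := by rw [hparts]; exact Finset.mem_insert_self _ _
    have : (P ⟨l + 1, hl⟩).part v = A ∪ B :=
      Finpartition.part_eq_of_mem _ hmem (by rw [← h1] at *; exact Finset.mem_union_left _ hvQ)
    rw [this, h1]; exact Finset.subset_union_left
  by_cases h2 : Q = B
  · have hmem : A ∪ B ∈ (P ⟨l + 1, hl⟩).parts := by rw [hparts]; exact Finset.mem_insert_self _ _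
    have : (P ⟨l + 1, hl⟩).part v = A ∪ B :=
      Finpartition.part_eq_of_mem _ hmem (by rw [← h2] at *; exact Finset.mem_union_right _ hvQ)
    rw [this, h2]; exact Finset.subset_union_right
  · have hmem : Q ∈ (P ⟨l + 1, hl⟩).parts := by
      rw [hparts]
      exact Finset.mem_insert_of_mem (Finset.mem_erase.2 ⟨h2, Finset.mem_erase.2 ⟨h1, hQmem⟩⟩)
    have : (P ⟨l + 1, hl⟩).part v = Q := Finpartition.part_eq_of_mem _ hmem hvQ
    rw [this]

lemma part_mono (hCS : IsContractionSeq P) {k l : ℕ} (hl : l < n) (hkl : k ≤ l) (v : V) :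
    (P ⟨k, by omega⟩).part v ⊆ (P ⟨l, hl⟩).part v := by
  induction l with
  | zero =>
    have : k = 0 := by omega
    subst this; exact subset_rfl
  | succ m ih =>
    rcases Nat.lt_or_ge k (m+1) with h | h
    · have h1 : k ≤ m := by omega
      have h2 : m < n := by omega
      exact (ih h2 h1).trans (part_subset_succ hCS hl v)
    · have : k = m + 1 := by omega
      subst this; exact subset_rfl

lemma part_zero (hCS : IsContractionSeq P) (h0 : 0 < n) (v : V) :
    (P ⟨0, h0⟩).part v = {v} := by
  apply Finpartition.part_eq_of_mem
  · rw [hCS.2.1 h0]; exact Finset.mem_image_of_mem _ (Finset.mem_univ v)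
  · exact Finset.mem_singleton_self v

lemma part_last (hCS : IsContractionSeq P) (h0 : 0 < n) (v : V) :
    (P ⟨n - 1, by omega⟩).part v = Finset.univ := by
  apply Finpartition.part_eq_of_mem
  · rw [hCS.2.2.1 h0]; exact Finset.mem_singleton_self _
  · exact Finset.mem_univ v

lemma mem_part_comm {k : Fin n} {u v : V} (h : v ∈ (P k).part u) : u ∈ (P k).part v := by
  have : (P k).part v = (P k).part u :=
    Finpartition.part_eq_of_mem _ ((Finpartition.part_mem _).2 (Finset.mem_univ u)) h
  rw [this]; exact Finpartition.mem_part _ (Finset.mem_univ u)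

lemma part_eq_comm {k : Fin n} {u v : V} (h : v ∈ (P k).part u) :
    (P k).part v = (P k).part u :=
  Finpartition.part_eq_of_mem _ ((Finpartition.part_mem _).2 (Finset.mem_univ u)) h

theorem exists_interval_order (hCS : IsContractionSeq P) (h0 : 0 < n) :
    ∃ e : Fin (Fintype.card V) ≃ V, ∀ (k : Fin n), ∀ Q ∈ (P k).parts,
      ∀ a b c : Fin (Fintype.card V), a ≤ b → b ≤ c → e a ∈ Q → e c ∈ Q → e b ∈ Q := by
  classical
  -- key of a finset
  have idx_inj : Function.Injective (fun v : V => ((Fintype.equivFin V v : ℕ))) := by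
    intro a b h
    exact (Fintype.equivFin V).injective (Fin.ext h)
  set key : Finset V → ℕ := fun Q => Q.sup (fun v => ((Fintype.equivFin V v : ℕ))) with hkey
  have key_ne : ∀ {X Y : Finset V}, X.Nonempty → Y.Nonempty → Disjoint X Y → key X ≠ key Y := by
    intro X Y hX hY hdisj h
    obtain ⟨x, hx, hxs⟩ := Finset.exists_mem_eq_sup X hX (fun v => ((Fintype.equivFin V v : ℕ)))
    obtain ⟨y, hy, hys⟩ := Finset.exists_mem_eq_sup Y hY (fun v => ((Fintype.equivFin V v : ℕ)))
    have : x = y := idx_inj (by simp only []; rw [← hxs, ← hys]; exact h)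
    subst this
    exact (Finset.disjoint_left.1 hdisj hx) hy
  -- merge time, abstracted so that `Nat.find` never unfolds
  obtain ⟨mt, mt_lt, mt_mem, mt_min⟩ :
      ∃ mt : V → V → ℕ, (∀ u v, mt u v < n) ∧
        (∀ u v, ∀ h : mt u v < n, v ∈ (P ⟨mt u v, h⟩).part u) ∧
        (∀ u v : V, ∀ j, j < mt u v → ∀ h : j < n, v ∉ (P ⟨j, h⟩).part u) := by
    have mtex : ∀ u v : V, ∃ k : ℕ, k < n ∧ ∀ h : k < n, v ∈ (P ⟨k, h⟩).part u := by
      intro u v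
      refine ⟨n - 1, by omega, fun h => ?_⟩
      rw [part_last hCS h0]; exact Finset.mem_univ v
    refine ⟨fun u v => Nat.find (mtex u v), fun u v => (Nat.find_spec (mtex u v)).1,
      fun u v h => (Nat.find_spec (mtex u v)).2 h, ?_⟩
    intro u v j hj h hmem
    exact Nat.find_min (mtex u v) hj ⟨h, fun _ => hmem⟩
  have mt_comm : ∀ u v, mt u v = mt v u := by
    have hle : ∀ u v, mt u v ≤ mt v u := by
      intro u v
      by_contra hlt
      push_neg at hlt
      have h1 : mt v u < n := mt_lt v u
      have := mt_mem v u h1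
      exact mt_min u v (mt v u) hlt h1 (mem_part_comm this)
    intro u v
    exact le_antisymm (hle u v) (hle v u)
  have mt_pos : ∀ {u v : V}, u ≠ v → 0 < mt u v := by
    intro u v huv
    rcases Nat.eq_zero_or_pos (mt u v) with h | h
    · exfalso
      have h1 : mt u v < n := mt_lt u v
      have hm := mt_mem u v h1
      have he : (⟨mt u v, h1⟩ : Fin n) = ⟨0, h0⟩ := Fin.ext h
      rw [he, part_zero hCS h0] at hm
      exact huv (Finset.mem_singleton.1 hm).symm
    · exact h
  -- previous parts
  have prevlt : ∀ u v : V, mt u v - 1 < n := fun u v => by have := mt_lt u v; omega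
  set pp : V → V → Finset V := fun u v => (P ⟨mt u v - 1, prevlt u v⟩).part u with hpp
  have pp_nonempty : ∀ u v, (pp u v).Nonempty :=
    fun u v => Finpartition.nonempty_of_mem_parts _ ((Finpartition.part_mem _).2 (Finset.mem_univ u))
  have pp_self : ∀ u v, u ∈ pp u v := fun u v => Finpartition.mem_part _ (Finset.mem_univ u)
  have pp_symm : ∀ u v : V, pp v u = (P ⟨mt u v - 1, prevlt u v⟩).part v := by
    intro u v
    show (P ⟨mt v u - 1, prevlt v u⟩).part v = _
    have he : (⟨mt v u - 1, prevlt v u⟩ : Fin n) = ⟨mt u v - 1, prevlt u v⟩ :=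
      Fin.ext (by simp only [mt_comm u v])
    rw [he]
  have pp_disj : ∀ {u v : V}, u ≠ v → Disjoint (pp u v) (pp v u) := by
    intro u v huv
    have h1 : mt u v - 1 < n := prevlt u v
    have hvm : v ∉ (P ⟨mt u v - 1, h1⟩).part u := by
      apply mt_min u v
      have := mt_pos huv
      omega
    rw [pp_symm u v, Finset.disjoint_left]
    intro a ha hav
    have h2 := part_eq_comm (P := P) (k := ⟨mt u v - 1, h1⟩) hav
    have h3 := part_eq_comm (P := P) (k := ⟨mt u v - 1, h1⟩) (ha : a ∈ (P _).part u)
    exact hvm (by rw [← h3, h2]; exact Finpartition.mem_part _ (Finset.mem_univ v))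
  -- the strict order
  set vlt : V → V → Prop := fun u v => u ≠ v ∧ key (pp u v) < key (pp v u) with hvlt
  have vlt_total : ∀ {u v : V}, u ≠ v → vlt u v ∨ vlt v u := by
    intro u v huv
    have hne := key_ne (pp_nonempty u v) (pp_nonempty v u) (pp_disj huv)
    rcases lt_or_gt_of_ne hne with h | h
    · exact Or.inl ⟨huv, h⟩
    · exact Or.inr ⟨huv.symm, h⟩
  have vlt_asymm : ∀ {u v : V}, vlt u v → vlt v u → False := by
    intro u v h1 h2
    exact lt_asymm h1.2 h2.2
  -- membership below merge time
  have mem_le : ∀ (u v : V) (j : ℕ) (hj : j < n), mt u v ≤ j → v ∈ (P ⟨j, hj⟩).part u := by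
    intro u v j hj hle
    exact part_mono hCS hj hle u (mt_mem u v (mt_lt u v))
  have le_of_mem : ∀ (u v : V) (j : ℕ) (hj : j < n), v ∈ (P ⟨j, hj⟩).part u → mt u v ≤ j := by
    intro u v j hj hmem
    by_contra hlt
    push_neg at hlt
    exact mt_min u v j hlt hj hmem
  -- transitivity
  have vlt_trans : ∀ {u v w : V}, vlt u v → vlt v w → vlt u w := by
    intro u v w huv hvw
    have huv1 : u ≠ v := huv.1
    have hvw1 : v ≠ w := hvw.1
    have huw1 : u ≠ w := by
      rintro rfl
      exact vlt_asymm huv hvw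
    refine ⟨huw1, ?_⟩
    rcases lt_trichotomy (mt u v) (mt v w) with hab | hab | hab
    · -- mt u v < mt v w ; mt u w = mt v w
      have hb : mt v w < n := mt_lt v w
      have hb1 : mt v w - 1 < n := by omega
      have hbpos : 0 < mt v w := mt_pos hvw1
      have hvu : v ∈ (P ⟨mt v w - 1, hb1⟩).part u := mem_le u v _ hb1 (by omega)
      have heq1 : (P ⟨mt v w - 1, hb1⟩).part v = (P ⟨mt v w - 1, hb1⟩).part u := part_eq_comm hvu
      have hmtw : mt u w = mt v w := by
        apply le_antisymm
        · apply le_of_mem u w _ (mt_lt v w)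
          have h1 : v ∈ (P ⟨mt v w, mt_lt v w⟩).part u := mem_le u v _ _ (by omega)
          have h2 : (P ⟨mt v w, mt_lt v w⟩).part v = (P ⟨mt v w, mt_lt v w⟩).part u :=
            part_eq_comm h1
          rw [← h2]
          exact mt_mem v w (mt_lt v w)
        · by_contra hlt
          push_neg at hlt
          have h3 : w ∈ (P ⟨mt v w - 1, hb1⟩).part u := mem_le u w _ hb1 (by omega)
          rw [← heq1] at h3
          exact mt_min v w _ (by omega) hb1 h3
      have e1 : pp u w = (P ⟨mt v w - 1, hb1⟩).part u := by
        show (P ⟨mt u w - 1, prevlt u w⟩).part u = _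
        have : (⟨mt u w - 1, prevlt u w⟩ : Fin n) = ⟨mt v w - 1, hb1⟩ :=
          Fin.ext (by simp only [hmtw])
        rw [this]
      have e2 : pp w u = (P ⟨mt v w - 1, hb1⟩).part w := by
        show (P ⟨mt w u - 1, prevlt w u⟩).part w = _
        have : (⟨mt w u - 1, prevlt w u⟩ : Fin n) = ⟨mt v w - 1, hb1⟩ :=
          Fin.ext (by simp only [mt_comm w u, hmtw])
        rw [this]
      have e3 : pp v w = (P ⟨mt v w - 1, hb1⟩).part v := rfl
      have e4 : pp w v = (P ⟨mt v w - 1, hb1⟩).part w := by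
        show (P ⟨mt w v - 1, prevlt w v⟩).part w = _
        have : (⟨mt w v - 1, prevlt w v⟩ : Fin n) = ⟨mt v w - 1, hb1⟩ :=
          Fin.ext (by simp only [mt_comm w v])
        rw [this]
      have := hvw.2
      rw [e3, e4, heq1] at this
      rw [e1, e2]
      exact this
    · -- mt u v = mt v w : impossible via merge structure
      exfalso
      have ha : mt u v < n := mt_lt u v
      have ha1 : mt u v - 1 < n := prevlt u v
      have hapos : 0 < mt u v := mt_pos huv1
      -- u, v, w all in part of u at time mt u v
      have hQv : v ∈ (P ⟨mt u v, ha⟩).part u := mt_mem u v ha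
      have hQw : w ∈ (P ⟨mt u v, ha⟩).part u := by
        have h1 : (P ⟨mt u v, ha⟩).part v = (P ⟨mt u v, ha⟩).part u := part_eq_comm hQv
        rw [← h1]
        exact mem_le v w _ ha (by omega)
      set Q := (P ⟨mt u v, ha⟩).part u with hQdef
      have hQparts : Q ∈ (P ⟨mt u v, ha⟩).parts := (Finpartition.part_mem _).2 (Finset.mem_univ u)
      set X := (P ⟨mt u v - 1, ha1⟩).part u with hX
      set Y := (P ⟨mt u v - 1, ha1⟩).part v with hY
      set Z := (P ⟨mt u v - 1, ha1⟩).part w with hZ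
      have hXparts : X ∈ (P ⟨mt u v - 1, ha1⟩).parts := (Finpartition.part_mem _).2 (Finset.mem_univ u)
      have hYparts : Y ∈ (P ⟨mt u v - 1, ha1⟩).parts := (Finpartition.part_mem _).2 (Finset.mem_univ v)
      have hZparts : Z ∈ (P ⟨mt u v - 1, ha1⟩).parts := (Finpartition.part_mem _).2 (Finset.mem_univ w)
      have hXQ : X ⊆ Q := part_mono hCS ha (by omega) u
      have hYQ : Y ⊆ Q := by
        have h1 : (P ⟨mt u v, ha⟩).part v = Q := part_eq_comm hQv
        rw [← h1]
        exact part_mono hCS ha (by omega) v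
      have hZQ : Z ⊆ Q := by
        have h1 : (P ⟨mt u v, ha⟩).part w = Q := part_eq_comm hQw
        rw [← h1]
        exact part_mono hCS ha (by omega) w
      -- X ≠ Y, Y ≠ Z, X ≠ Z
      have hXY : X ≠ Y := by
        intro h
        have : v ∈ X := by rw [h]; exact Finpartition.mem_part _ (Finset.mem_univ v)
        exact mt_min u v _ (by omega) ha1 this
      have hYZ : Y ≠ Z := by
        intro h
        have : w ∈ Y := by rw [h]; exact Finpartition.mem_part _ (Finset.mem_univ w)
        have h2 : mt v w ≤ mt u v - 1 := le_of_mem v w _ ha1 this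
        omega
      have hXZ : X ≠ Z := by
        intro h
        -- keys : key (pp u v) < key (pp v u) and key (pp v w) < key (pp w v)
        have k1 := huv.2
        have k2 := hvw.2
        have e1 : pp u v = X := rfl
        have e2 : pp v u = Y := by
          rw [pp_symm u v]
        have e3 : pp v w = Y := by
          show (P ⟨mt v w - 1, prevlt v w⟩).part v = Y
          have : (⟨mt v w - 1, prevlt v w⟩ : Fin n) = ⟨mt u v - 1, ha1⟩ :=
            Fin.ext (by simp only [← hab])
          rw [this]
        have e4 : pp w v = Z := by
          show (P ⟨mt w v - 1, prevlt w v⟩).part w = Z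
          have : (⟨mt w v - 1, prevlt w v⟩ : Fin n) = ⟨mt u v - 1, ha1⟩ :=
            Fin.ext (by simp only [mt_comm w v, ← hab])
          rw [this]
        rw [e1, e2] at k1
        rw [e3, e4, ← h] at k2
        exact lt_asymm k1 k2
      -- merge structure at step mt u v
      obtain ⟨A, B, hA, hB, hAB, hparts⟩ := hCS.2.2.2 (mt u v - 1) (by omega)
      have hfin : (⟨mt u v - 1 + 1, by omega⟩ : Fin n) = ⟨mt u v, ha⟩ :=
        Fin.ext (show mt u v - 1 + 1 = mt u v by omega)
      rw [hfin] at hparts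
      have hsub : ∀ W, W ∈ (P ⟨mt u v - 1, ha1⟩).parts → W ⊆ Q → W = A ∨ W = B ∨ W = Q := by
        intro W hW hWQ
        have hQin := hQparts
        rw [hparts] at hQin
        rcases Finset.mem_insert.1 hQin with hQ1 | hQ1
        · obtain ⟨x, hx⟩ := Finpartition.nonempty_of_mem_parts _ hW
          have : x ∈ A ∪ B := by rw [← hQ1]; exact hWQ hx
          rcases Finset.mem_union.1 this with h | h
          · exact Or.inl (Finpartition.eq_of_mem_parts _ hW hA hx h)
          · exact Or.inr (Or.inl (Finpartition.eq_of_mem_parts _ hW hB hx h))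
        · have hQ2 : Q ∈ (P ⟨mt u v - 1, ha1⟩).parts :=
            Finset.mem_of_mem_erase (Finset.mem_of_mem_erase hQ1)
          obtain ⟨x, hx⟩ := Finpartition.nonempty_of_mem_parts _ hW
          exact Or.inr (Or.inr (Finpartition.eq_of_mem_parts _ hW hQ2 hx (hWQ hx)))
      have hXc := hsub X hXparts hXQ
      have hYc := hsub Y hYparts hYQ
      have hZc := hsub Z hZparts hZQ
      -- if any equals Q then it is a part of both partitions containing u/v/w; then others equal it
      have hnotQ : ∀ W, W ∈ (P ⟨mt u v - 1, ha1⟩).parts → W ⊆ Q → W ≠ Q := by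
        intro W hW hWQ hWeq
        -- X and W are both parts of P_{a-1} and u ∈ X, u ∈ Q
        have hXW : X = W := Finpartition.eq_of_mem_parts _ hXparts hW
          (Finpartition.mem_part _ (Finset.mem_univ u)) (by rw [hWeq]; exact hXQ (Finpartition.mem_part _ (Finset.mem_univ u)))
        have hYW : Y = W := Finpartition.eq_of_mem_parts _ hYparts hW
          (Finpartition.mem_part _ (Finset.mem_univ v)) (by rw [hWeq]; exact hYQ (Finpartition.mem_part _ (Finset.mem_univ v)))
        exact hXY (hXW.trans hYW.symm)
      rcases hXc with h1 | h1 | h1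
      · rcases hYc with h2 | h2 | h2
        · exact hXY (h1.trans h2.symm)
        · rcases hZc with h3 | h3 | h3
          · exact hXZ (h1.trans h3.symm)
          · exact hYZ (h2.trans h3.symm)
          · exact hnotQ Z hZparts hZQ h3
        · exact hnotQ Y hYparts hYQ h2
      · rcases hYc with h2 | h2 | h2
        · rcases hZc with h3 | h3 | h3
          · exact hYZ (h2.trans h3.symm)
          · exact hXZ (h1.trans h3.symm)
          · exact hnotQ Z hZparts hZQ h3
        · exact hXY (h1.trans h2.symm)
        · exact hnotQ Y hYparts hYQ h2
      · exact hnotQ X hXparts hXQ h1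
    · -- mt v w < mt u v ; mt u w = mt u v
      have ha : mt u v < n := mt_lt u v
      have ha1 : mt u v - 1 < n := prevlt u v
      have hwv : w ∈ (P ⟨mt u v - 1, ha1⟩).part v := mem_le v w _ ha1 (by omega)
      have heq1 : (P ⟨mt u v - 1, ha1⟩).part w = (P ⟨mt u v - 1, ha1⟩).part v := part_eq_comm hwv
      have hmtw : mt u w = mt u v := by
        apply le_antisymm
        · apply le_of_mem u w _ ha
          have h1 : w ∈ (P ⟨mt u v, ha⟩).part v := mem_le v w _ ha (by omega)
          have h2 : (P ⟨mt u v, ha⟩).part v = (P ⟨mt u v, ha⟩).part u :=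
            part_eq_comm (mt_mem u v ha)
          rw [← h2]
          exact h1
        · by_contra hlt
          push_neg at hlt
          have h3 : w ∈ (P ⟨mt u v - 1, ha1⟩).part u := mem_le u w _ ha1 (by omega)
          have h4 : (P ⟨mt u v - 1, ha1⟩).part w = (P ⟨mt u v - 1, ha1⟩).part u := part_eq_comm h3
          have h5 : v ∈ (P ⟨mt u v - 1, ha1⟩).part u := by
            rw [← h4, heq1]
            exact Finpartition.mem_part _ (Finset.mem_univ v)
          exact mt_min u v _ (by omega) ha1 h5
      have e1 : pp u w = (P ⟨mt u v - 1, ha1⟩).part u := by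
        show (P ⟨mt u w - 1, prevlt u w⟩).part u = _
        have : (⟨mt u w - 1, prevlt u w⟩ : Fin n) = ⟨mt u v - 1, ha1⟩ :=
          Fin.ext (by simp only [hmtw])
        rw [this]
      have e2 : pp w u = (P ⟨mt u v - 1, ha1⟩).part w := by
        show (P ⟨mt w u - 1, prevlt w u⟩).part w = _
        have : (⟨mt w u - 1, prevlt w u⟩ : Fin n) = ⟨mt u v - 1, ha1⟩ :=
          Fin.ext (by simp only [mt_comm w u, hmtw])
        rw [this]
      have e3 : pp v u = (P ⟨mt u v - 1, ha1⟩).part v := pp_symm u v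
      have := huv.2
      rw [e3] at this
      rw [e1, e2, heq1]
      exact this
  -- build the linear order
  letI lo : LinearOrder V :=
    { le := fun u v => u = v ∨ vlt u v
      le_refl := fun a => Or.inl rfl
      le_trans := by
        rintro a b c (rfl | hab) (rfl | hbc)
        · exact Or.inl rfl
        · exact Or.inr hbc
        · exact Or.inr hab
        · exact Or.inr (vlt_trans hab hbc)
      le_antisymm := by
        rintro a b (rfl | hab) h2
        · rfl
        · rcases h2 with rfl | hba
          · rfl
          · exact absurd hba (fun h => vlt_asymm hab h)
      le_total := by
        intro a b
        rcases eq_or_ne a b with rfl | hne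
        · exact Or.inl (Or.inl rfl)
        · rcases vlt_total hne with h | h
          · exact Or.inl (Or.inr h)
          · exact Or.inr (Or.inr h)
      toDecidableLE := fun a b => Classical.propDecidable _ }
  refine ⟨(monoEquivOfFin V rfl).toEquiv, ?_⟩
  intro k Q hQ a b c hab hbc haQ hcQ
  set e := (monoEquivOfFin V rfl) with he
  have hmono : ∀ {x y : Fin (Fintype.card V)}, x ≤ y → e x = e y ∨ vlt (e x) (e y) := by
    intro x y hxy
    exact e.monotone hxy
  rcases hmono hab with h1 | h1
  · show e b ∈ Q
    rw [← h1]; exact haQ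
  rcases hmono hbc with h2 | h2
  · show e b ∈ Q
    rw [h2]; exact hcQ
  -- now vlt (e a) (e b) and vlt (e b) (e c), e a ∈ Q, e c ∈ Q
  by_contra hbQ
  set u := e a
  set v := e b
  set w := e c
  have hk : (k : ℕ) < n := k.2
  have hQu : (P ⟨(k : ℕ), hk⟩).part u = Q := by
    have : (⟨(k : ℕ), hk⟩ : Fin n) = k := Fin.ext rfl
    rw [this]
    exact Finpartition.part_eq_of_mem _ hQ haQ
  have hQw : (P ⟨(k : ℕ), hk⟩).part w = Q := by
    have : (⟨(k : ℕ), hk⟩ : Fin n) = k := Fin.ext rfl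
    rw [this]
    exact Finpartition.part_eq_of_mem _ hQ hcQ
  -- v not in Q: merge times exceed k
  have hkuv : (k:ℕ) < mt u v := by
    by_contra hle
    push_neg at hle
    have := mem_le u v _ hk hle
    rw [hQu] at this
    exact hbQ this
  have hkwv : (k:ℕ) < mt w v := by
    by_contra hle
    push_neg at hle
    have := mem_le w v _ hk hle
    rw [hQw] at this
    exact hbQ this
  have hkvw : (k:ℕ) < mt v w := by rw [← mt_comm w v]; exact hkwv
  -- mt u v = mt v w
  have hmteq : mt u v = mt v w := by
    rcases lt_trichotomy (mt u v) (mt v w) with hlt | heq | hlt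
    · exfalso
      have hb1 : mt v w - 1 < n := prevlt v w
      have h1 : v ∈ (P ⟨mt v w - 1, hb1⟩).part u := mem_le u v _ hb1 (by omega)
      have h2 : (P ⟨mt v w - 1, hb1⟩).part v = (P ⟨mt v w - 1, hb1⟩).part u := part_eq_comm h1
      have h3 : w ∈ (P ⟨mt v w - 1, hb1⟩).part u := by
        have : Q ⊆ (P ⟨mt v w - 1, hb1⟩).part u := by
          rw [← hQu]
          exact part_mono hCS hb1 (by omega) u
        exact this hcQ
      rw [← h2] at h3
      exact mt_min v w _ (by omega) hb1 h3
    · exact heq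
    · exfalso
      have ha1 : mt u v - 1 < n := prevlt u v
      have hwv1 : w ∈ (P ⟨mt u v - 1, ha1⟩).part v := mem_le v w _ ha1 (by omega)
      have h2 : (P ⟨mt u v - 1, ha1⟩).part w = (P ⟨mt u v - 1, ha1⟩).part v := part_eq_comm hwv1
      have h3 : u ∈ (P ⟨mt u v - 1, ha1⟩).part w := by
        have : Q ⊆ (P ⟨mt u v - 1, ha1⟩).part w := by
          rw [← hQw]
          exact part_mono hCS ha1 (by omega) w
        exact this haQ
      rw [h2] at h3
      have h4 : v ∈ (P ⟨mt u v - 1, ha1⟩).part u := by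
        have h5 := part_eq_comm h3
        rw [h5]
        exact Finpartition.mem_part _ (Finset.mem_univ v)
      exact mt_min u v _ (by omega) ha1 h4
  -- same parts at time mt u v - 1, contradiction with keys
  have ha1 : mt u v - 1 < n := prevlt u v
  have hXW : (P ⟨mt u v - 1, ha1⟩).part u = (P ⟨mt u v - 1, ha1⟩).part w := by
    have hsub1 : Q ⊆ (P ⟨mt u v - 1, ha1⟩).part u := by
      rw [← hQu]; exact part_mono hCS ha1 (by omega) u
    have h3 : u ∈ (P ⟨mt u v - 1, ha1⟩).part w := by
      have hsub2 : Q ⊆ (P ⟨mt u v - 1, ha1⟩).part w := by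
        rw [← hQw]; exact part_mono hCS ha1 (by omega) w
      exact hsub2 haQ
    have h4 := part_eq_comm h3
    rw [h4]
  have k1 := h1.2
  have k2 := h2.2
  have e1 : pp u v = (P ⟨mt u v - 1, ha1⟩).part u := rfl
  have e2 : pp v u = (P ⟨mt u v - 1, ha1⟩).part v := pp_symm u v
  have e3 : pp v w = (P ⟨mt u v - 1, ha1⟩).part v := by
    show (P ⟨mt v w - 1, prevlt v w⟩).part v = _
    have : (⟨mt v w - 1, prevlt v w⟩ : Fin n) = ⟨mt u v - 1, ha1⟩ :=
      Fin.ext (by simp only [← hmteq])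
    rw [this]
  have e4 : pp w v = (P ⟨mt u v - 1, ha1⟩).part w := by
    show (P ⟨mt w v - 1, prevlt w v⟩).part w = _
    have : (⟨mt w v - 1, prevlt w v⟩ : Fin n) = ⟨mt u v - 1, ha1⟩ :=
      Fin.ext (by simp only [mt_comm w v, ← hmteq])
    rw [this]
  rw [e1, e2] at k1
  rw [e3, e4, ← hXW] at k2
  exact lt_asymm k1 k2


end AuxA

section AuxB
open Finset
variable {V : Type*} [Fintype V] [DecidableEq V]


open Finset

variable {V : Type*} [Fintype V] [DecidableEq V]

/-- `A` is an interval with respect to the enumeration `e`. -/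
def IntervalF {N : ℕ} (e : Fin N ≃ V) (A : Finset V) : Prop :=
  ∀ a b c : Fin N, a ≤ b → b ≤ c → e a ∈ A → e c ∈ A → e b ∈ A

/-- The whole `i`-th block (fiber of `f`) maps into `A`. -/
def FullB {N d : ℕ} (e : Fin N ≃ V) (f : Fin N → Fin d) (i : Fin d) (A : Finset V) : Prop :=
  ∀ a : Fin N, f a = i → e a ∈ A

/-- The `i`-th block meets `A`. -/
def MeetsB {N d : ℕ} (e : Fin N ≃ V) (f : Fin N → Fin d) (i : Fin d) (A : Finset V) : Prop :=
  ∃ a : Fin N, f a = i ∧ e a ∈ A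

lemma mid_full {N d : ℕ} (e : Fin N ≃ V) {f : Fin N → Fin d} (hf : Monotone f)
    {A : Finset V} (hA : IntervalF e A) {i1 i2 i3 : Fin d} (h12 : i1 < i2) (h23 : i2 < i3)
    (hm1 : MeetsB e f i1 A) (hm3 : MeetsB e f i3 A) : FullB e f i2 A := by
  obtain ⟨a1, ha1, ha1A⟩ := hm1
  obtain ⟨a3, ha3, ha3A⟩ := hm3
  intro b hb
  have h1 : a1 ≤ b := by
    by_contra h
    push_neg at h
    have := hf h.le
    rw [ha1, hb] at this
    exact absurd this (not_le_of_gt h12)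
  have h2 : b ≤ a3 := by
    by_contra h
    push_neg at h
    have := hf h.le
    rw [ha3, hb] at this
    exact absurd this (not_le_of_gt h23)
  exact hA a1 b a3 h1 h2 ha1A ha3A

lemma at_most_one_full {N d : ℕ} (e : Fin N ≃ V) {f : Fin N → Fin d} (hf : Monotone f)
    {A1 A2 : Finset V} (hdisj : Disjoint A1 A2)
    (h1 : IntervalF e A1) (h2 : IntervalF e A2)
    (hn1 : ∀ i, ¬ FullB e f i A1) (hn2 : ∀ i, ¬ FullB e f i A2)
    {i j : Fin d} (hij : i ≠ j)
    (hFi : FullB e f i (A1 ∪ A2)) (hFj : FullB e f j (A1 ∪ A2)) : False := by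
  -- wlog i < j
  wlog hlt : i < j generalizing i j
  · exact this hij.symm hFj hFi (lt_of_le_of_ne (not_lt.1 hlt) hij.symm)
  -- fibers are nonempty in both A1 and A2 sides
  have get : ∀ (k : Fin d), FullB e f k (A1 ∪ A2) →
      (∃ a, f a = k ∧ e a ∈ A1) ∧ (∃ a, f a = k ∧ e a ∈ A2) := by
    intro k hFk
    constructor
    · by_contra h
      push_neg at h
      apply hn2 k
      intro a ha
      rcases Finset.mem_union.1 (hFk a ha) with h' | h'
      · exact absurd h' (h a ha)
      · exact h'
    · by_contra h
      push_neg at h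
      apply hn1 k
      intro a ha
      rcases Finset.mem_union.1 (hFk a ha) with h' | h'
      · exact h'
      · exact absurd h' (h a ha)
  obtain ⟨⟨a1, ha1, ha1A⟩, ⟨a2, ha2, ha2A⟩⟩ := get i hFi
  obtain ⟨⟨b1, hb1, hb1A⟩, ⟨b2, hb2, hb2A⟩⟩ := get j hFj
  have hib : ∀ (x y : Fin N), f x = i → f y = j → x ≤ y := by
    intro x y hx hy
    by_contra h
    push_neg at h
    have := hf h.le
    rw [hx, hy] at this
    exact absurd this (not_le_of_gt hlt)
  rcases le_or_gt a1 a2 with h | h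
  · -- a1 ≤ a2 ≤ b1 : e a2 ∈ A1, contradiction with A2
    have : e a2 ∈ A1 := h1 a1 a2 b1 h (hib a2 b1 ha2 hb1) ha1A hb1A
    exact Finset.disjoint_left.1 hdisj this ha2A
  · -- a2 < a1 ≤ b2 : e a1 ∈ A2
    have : e a1 ∈ A2 := h2 a2 a1 b2 h.le (hib a1 b2 ha1 hb2) ha2A hb2A
    exact Finset.disjoint_left.1 hdisj ha1A this

open Classical in
lemma met_card_le_three {N d : ℕ} (e : Fin N ≃ V) {f : Fin N → Fin d} (hf : Monotone f)
    {A1 A2 : Finset V} (hdisj : Disjoint A1 A2)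
    (h1 : IntervalF e A1) (h2 : IntervalF e A2) (hU : IntervalF e (A1 ∪ A2))
    (hn1 : ∀ i, ¬ FullB e f i A1) (hn2 : ∀ i, ¬ FullB e f i A2) :
    (Finset.univ.filter fun i : Fin d => MeetsB e f i (A1 ∪ A2)).card ≤ 3 := by
  by_contra h
  push_neg at h
  set s := Finset.univ.filter fun i : Fin d => MeetsB e f i (A1 ∪ A2) with hs
  have hsne : s.Nonempty := Finset.card_pos.1 (by omega)
  set p := s.min' hsne with hp
  set q := s.max' hsne with hq
  have hpq : p < q := s.min'_lt_max'_of_card (by omega)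
  have hqmem : q ∈ s.erase p := Finset.mem_erase.2 ⟨ne_of_gt hpq, s.max'_mem hsne⟩
  have hc1 : (s.erase p).card = s.card - 1 := Finset.card_erase_of_mem (s.min'_mem hsne)
  have hc2 : ((s.erase p).erase q).card = (s.erase p).card - 1 := Finset.card_erase_of_mem hqmem
  have hcard : 1 < ((s.erase p).erase q).card := by omega
  obtain ⟨x, hx, y, hy, hxy⟩ := Finset.one_lt_card.1 hcard
  have hmeets : ∀ z ∈ s, MeetsB e f z (A1 ∪ A2) := by
    intro z hz
    exact (Finset.mem_filter.1 hz).2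
  have hmid : ∀ z ∈ (s.erase p).erase q, FullB e f z (A1 ∪ A2) := by
    intro z hz
    have hz1 : z ≠ q := (Finset.mem_erase.1 hz).1
    have hz2 : z ≠ p := (Finset.mem_erase.1 (Finset.mem_of_mem_erase hz)).1
    have hz3 : z ∈ s := Finset.mem_of_mem_erase (Finset.mem_of_mem_erase hz)
    have hpz : p < z := lt_of_le_of_ne (s.min'_le z hz3) (Ne.symm hz2)
    have hzq : z < q := lt_of_le_of_ne (s.le_max' z hz3) hz1
    exact mid_full e hf hU hpz hzq (hmeets p (s.min'_mem hsne)) (hmeets q (s.max'_mem hsne))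
  exact at_most_one_full e hf hdisj h1 h2 hn1 hn2 hxy (hmid x hx) (hmid y hy)

lemma exists_middle {d : ℕ} {a b c : Fin d} (hab : a ≠ b) (hac : a ≠ c) (hbc : b ≠ c) :
    ∃ x y z : Fin d, x < y ∧ y < z ∧ x ∈ ({a, b, c} : Finset (Fin d)) ∧
      y ∈ ({a, b, c} : Finset (Fin d)) ∧ z ∈ ({a, b, c} : Finset (Fin d)) := by
  have ma : a ∈ ({a, b, c} : Finset (Fin d)) := by simp
  have mb : b ∈ ({a, b, c} : Finset (Fin d)) := by simp
  have mc : c ∈ ({a, b, c} : Finset (Fin d)) := by simp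
  rcases lt_or_gt_of_ne hab with h1 | h1
  · rcases lt_or_gt_of_ne hbc with h2 | h2
    · exact ⟨a, b, c, h1, h2, ma, mb, mc⟩
    · rcases lt_or_gt_of_ne hac with h3 | h3
      · exact ⟨a, c, b, h3, h2, ma, mc, mb⟩
      · exact ⟨c, a, b, h3, h1, mc, ma, mb⟩
  · rcases lt_or_gt_of_ne hac with h3 | h3
    · exact ⟨b, a, c, h1, h3, mb, ma, mc⟩
    · rcases lt_or_gt_of_ne hbc with h2 | h2
      · exact ⟨b, c, a, h2, h3, mb, mc, ma⟩
      · exact ⟨c, b, a, h2, h1, mc, mb, ma⟩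

lemma pure_const {N : ℕ} (G : SimpleGraph V) (e : Fin N ≃ V) (hN : N = Fintype.card V)
    {B1 B2 : Finset V} (h : ¬ ImpurePair G B1 B2) : True := trivial

lemma adjMatrix_symm (G : SimpleGraph V) (e : Fin (Fintype.card V) ≃ V)
    (r c : Fin (Fintype.card V)) : adjMatrix G e r c = adjMatrix G e c r := by
  unfold adjMatrix
  by_cases h : G.Adj (e r) (e c)
  · rw [if_pos h, if_pos h.symm]
  · rw [if_neg h, if_neg (fun h' => h h'.symm)]

lemma mixed_swap {N : ℕ} {M : BMatrix N N} (hsym : ∀ a b, M a b = M b a)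
    {R C : Set (Fin N)} (h : Mixed M R C) : Mixed M C R := by
  obtain ⟨hH, hV⟩ := h
  constructor
  · intro hH'
    apply hV
    intro j hj i hi i' hi'
    rw [hsym i j, hsym i' j]
    exact hH' j hj i hi i' hi'
  · intro hV'
    apply hH
    intro i hi j hj j' hj'
    rw [hsym i j, hsym i j']
    exact hV' i hi j hj j' hj'

open Classical in
lemma core {t d : ℕ} (G : SimpleGraph V) (e : Fin (Fintype.card V) ≃ V)
    (P : Fin (Fintype.card V) → Finpartition (Finset.univ : Finset V))
    (hW : SeqWidthLE G P t)
    (hInt : ∀ (k : Fin (Fintype.card V)), ∀ Q ∈ (P k).parts, IntervalF e Q)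
    {f g : Fin (Fintype.card V) → Fin d}
    (hg : Monotone g)
    (hMixV : ∀ i j : Fin d, i ≠ j →
      ¬ Vertical (adjMatrix G e) {a | f a = i} {b | g b = j})
    (k : Fin (Fintype.card V)) {A : Finset V} (hA : A ∈ (P k).parts)
    (hOther : ∀ B ∈ (P k).parts, B ≠ A → ∀ j : Fin d, ¬ FullB e g j B)
    {i0 : Fin d} (hFull : FullB e f i0 A) :
    (Finset.univ.filter fun j : Fin d => j ≠ i0 ∧ ¬ MeetsB e g j A).card ≤ 2 * t := by
  set M := adjMatrix G e with hM
  set J := Finset.univ.filter (fun j : Fin d => j ≠ i0 ∧ ¬ MeetsB e g j A) with hJ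
  have hw : ∀ j ∈ J, ∃ B : Finset V,
      B ∈ (P k).parts ∧ B ≠ A ∧ ImpurePair G A B ∧ MeetsB e g j B := by
    intro j hj
    obtain ⟨hji0, hnm⟩ := (Finset.mem_filter.1 hj).2
    have hnv := hMixV i0 j (fun h => hji0 h.symm)
    unfold Vertical at hnv
    push_neg at hnv
    obtain ⟨c, hc, r, hr, r', hr', hne⟩ := hnv
    have hcB : e c ∈ (P k).part (e c) := Finpartition.mem_part _ (Finset.mem_univ _)
    refine ⟨(P k).part (e c), (Finpartition.part_mem _).2 (Finset.mem_univ _), ?_, ?_,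
      ⟨c, hc, hcB⟩⟩
    · intro hBA
      exact hnm ⟨c, hc, by rw [← hBA]; exact hcB⟩
    · intro hpure
      have hrA : e r ∈ A := hFull r hr
      have hr'A : e r' ∈ A := hFull r' hr'
      rcases hpure with hcomp | hanti
      · have h1 : M r c = true := by
          rw [hM]; unfold adjMatrix; rw [if_pos (hcomp _ hrA _ hcB)]
        have h2 : M r' c = true := by
          rw [hM]; unfold adjMatrix; rw [if_pos (hcomp _ hr'A _ hcB)]
        exact hne (h1.trans h2.symm)
      · have h1 : M r c = false := by
          rw [hM]; unfold adjMatrix; rw [if_neg (hanti _ hrA _ hcB)]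
        have h2 : M r' c = false := by
          rw [hM]; unfold adjMatrix; rw [if_neg (hanti _ hr'A _ hcB)]
        exact hne (h1.trans h2.symm)
  choose Bf hBmem hBne hBimp hBmeets using hw
  set psi : Fin d → Finset V := fun j => if hj : j ∈ J then Bf j hj else ∅ with hpsi
  have hpsival : ∀ j (hj : j ∈ J), psi j = Bf j hj := by
    intro j hj
    rw [hpsi]
    simp only [dif_pos hj]
  have hfiber : ∀ b ∈ J.image psi, (J.filter fun j => psi j = b).card ≤ 2 := by
    intro b hb
    obtain ⟨j0, hj0, hj0eq⟩ := Finset.mem_image.1 hb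
    have hbmem : b ∈ (P k).parts := by rw [← hj0eq, hpsival j0 hj0]; exact hBmem j0 hj0
    have hbne : b ≠ A := by rw [← hj0eq, hpsival j0 hj0]; exact hBne j0 hj0
    by_contra hgt
    push_neg at hgt
    obtain ⟨j1, hj1, j2, hj2, j3, hj3, h12, h13, h23⟩ := Finset.two_lt_card.1 hgt
    have key : ∀ jj, jj ∈ J.filter (fun j => psi j = b) → MeetsB e g jj b := by
      intro jj hjj
      obtain ⟨hjJ, hjb⟩ := Finset.mem_filter.1 hjj
      rw [← hjb, hpsival jj hjJ]
      exact hBmeets jj hjJ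
    have hmts : ∀ w ∈ ({j1, j2, j3} : Finset (Fin d)), MeetsB e g w b := by
      intro w hwmem
      rcases Finset.mem_insert.1 hwmem with rfl | hwmem2
      · exact key _ hj1
      rcases Finset.mem_insert.1 hwmem2 with rfl | hwmem3
      · exact key _ hj2
      · rw [Finset.mem_singleton.1 hwmem3]
        exact key _ hj3
    obtain ⟨x, y, z, hxy, hyz, hx, hy, hz⟩ := exists_middle h12 h13 h23
    have hFullb := mid_full e hg (hInt k b hbmem) hxy hyz (hmts x hx) (hmts z hz)
    exact hOther b hbmem hbne y hFullb
  have h1 : J.card ≤ 2 * (J.image psi).card := Finset.card_le_mul_card_image J 2 hfiber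
  have h2 : ((J.image psi : Finset (Finset V)) : Set (Finset V)) ⊆
      {B | B ∈ (P k).parts ∧ B ≠ A ∧ ImpurePair G A B} := by
    intro b hb
    obtain ⟨j0, hj0, hj0eq⟩ := Finset.mem_image.1 (by exact_mod_cast hb)
    refine ⟨?_, ?_, ?_⟩
    · rw [← hj0eq, hpsival j0 hj0]; exact hBmem j0 hj0
    · rw [← hj0eq, hpsival j0 hj0]; exact hBne j0 hj0
    · rw [← hj0eq, hpsival j0 hj0]; exact hBimp j0 hj0
  have h3 := hW k A hA
  have h4 : (J.image psi).card ≤ t := by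
    have h5 := Set.ncard_le_ncard h2 (Set.toFinite _)
    rw [Set.ncard_coe_finset] at h5
    omega
  omega

open Classical in
lemma crux {t d : ℕ} (G : SimpleGraph V) (e : Fin (Fintype.card V) ≃ V)
    (P : Fin (Fintype.card V) → Finpartition (Finset.univ : Finset V))
    (hW : SeqWidthLE G P t)
    (hInt : ∀ k, ∀ Q ∈ (P k).parts, IntervalF e Q)
    (hd : d = 4 * t + 4)
    (D : Division (Fintype.card V) (Fintype.card V) d)
    (hMix : IsAlmostMixedMinor (adjMatrix G e) D)
    (k : Fin (Fintype.card V)) {A A1 A2 : Finset V}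
    (hA : A ∈ (P k).parts) (hAeq : A = A1 ∪ A2) (hdisj : Disjoint A1 A2)
    (hI1 : IntervalF e A1) (hI2 : IntervalF e A2)
    (hA1r : ∀ i, ¬ FullB e D.row i A1) (hA1c : ∀ j, ¬ FullB e D.col j A1)
    (hA2r : ∀ i, ¬ FullB e D.row i A2) (hA2c : ∀ j, ¬ FullB e D.col j A2)
    (hOther : ∀ B ∈ (P k).parts, B ≠ A →
      (∀ i, ¬ FullB e D.row i B) ∧ (∀ j, ¬ FullB e D.col j B))
    {i0 : Fin d} (hFull : FullB e D.row i0 A) : False := by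
  have hsym : ∀ a b, adjMatrix G e a b = adjMatrix G e b a := adjMatrix_symm G e
  have hMixV : ∀ i j : Fin d, i ≠ j →
      ¬ Vertical (adjMatrix G e) {a | D.row a = i} {b | D.col b = j} :=
    fun i j h => (hMix i j h).2
  have hMixVT : ∀ i j : Fin d, i ≠ j →
      ¬ Vertical (adjMatrix G e) {a | D.col a = i} {b | D.row b = j} :=
    fun i j h => (mixed_swap hsym (hMix j i (fun h2 => h h2.symm))).2
  have hAint : IntervalF e A := hInt k A hA
  -- col-side count
  have hJ1 := core G e P hW hInt (f := D.row) (g := D.col) D.col_mono hMixV k hA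
    (fun B hB hne => (hOther B hB hne).2) hFull
  have hU : IntervalF e (A1 ∪ A2) := by rw [← hAeq]; exact hAint
  have hmet := met_card_le_three e D.col_mono hdisj hI1 hI2 hU hA1c hA2c
  rw [← hAeq] at hmet
  -- univ is covered
  have hsub : (Finset.univ : Finset (Fin d)) ⊆
      (Finset.univ.filter fun j : Fin d => j ≠ i0 ∧ ¬ MeetsB e D.col j A) ∪
      ({i0} ∪ (Finset.univ.filter fun j : Fin d => MeetsB e D.col j A)) := by
    intro j _
    by_cases h1 : j = i0
    · exact Finset.mem_union_right _ (Finset.mem_union_left _ (by simp [h1]))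
    by_cases h2 : MeetsB e D.col j A
    · exact Finset.mem_union_right _ (Finset.mem_union_right _ (by simp [h2]))
    · exact Finset.mem_union_left _ (by simp [h1, h2])
  have hd4 : d ≤ 2 * t + 4 := by
    have hcard := Finset.card_le_card hsub
    have hu1 := Finset.card_union_le
      ((Finset.univ.filter fun j : Fin d => j ≠ i0 ∧ ¬ MeetsB e D.col j A))
      ({i0} ∪ (Finset.univ.filter fun j : Fin d => MeetsB e D.col j A))
    have hu2 := Finset.card_union_le ({i0} : Finset (Fin d))
      (Finset.univ.filter fun j : Fin d => MeetsB e D.col j A)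
    have huc : (Finset.univ : Finset (Fin d)).card = d := by simp
    have hone : ({i0} : Finset (Fin d)).card = 1 := Finset.card_singleton _
    omega
  have ht0 : t = 0 := by omega
  have hdd : d = 4 := by omega
  subst hdd
  subst ht0
  -- J is empty : every other column block meets A
  have hMeetsCol : ∀ j : Fin 4, j ≠ i0 → MeetsB e D.col j A := by
    intro j hj
    by_contra hn
    have hmem : j ∈ (Finset.univ.filter fun j : Fin 4 => j ≠ i0 ∧ ¬ MeetsB e D.col j A) := by
      simp [hj, hn]
    have := Finset.card_eq_zero.1 (by omega :
      (Finset.univ.filter fun j : Fin 4 => j ≠ i0 ∧ ¬ MeetsB e D.col j A).card = 0)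
    rw [this] at hmem
    exact absurd hmem (Finset.notMem_empty j)
  -- pick a middle index
  have hex : ∃ x m z : Fin 4, x < m ∧ m < z ∧ x ≠ i0 ∧ m ≠ i0 ∧ z ≠ i0 ∧
      (0 : Fin 4) < m ∧ m < (3 : Fin 4) := by
    fin_cases i0 <;> decide
  obtain ⟨x, m, z, hxm, hmz, hxne, hmne, hzne, h0m, hm3⟩ := hex
  have hFullColm : FullB e D.col m A :=
    mid_full e D.col_mono hAint hxm hmz (hMeetsCol x hxne) (hMeetsCol z hzne)
  -- row-side count with the transposed division
  have hJ2 := core G e P hW hInt (f := D.col) (g := D.row) D.row_mono hMixVT k hA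
    (fun B hB hne => (hOther B hB hne).1) hFullColm
  have hMeetsRow : ∀ i : Fin 4, i ≠ m → MeetsB e D.row i A := by
    intro i hi
    by_contra hn
    have hmem : i ∈ (Finset.univ.filter fun i : Fin 4 => i ≠ m ∧ ¬ MeetsB e D.row i A) := by
      simp [hi, hn]
    have := Finset.card_eq_zero.1 (by omega :
      (Finset.univ.filter fun i : Fin 4 => i ≠ m ∧ ¬ MeetsB e D.row i A).card = 0)
    rw [this] at hmem
    exact absurd hmem (Finset.notMem_empty i)
  have hFullRowm : FullB e D.row m A :=
    mid_full e D.row_mono hAint h0m hm3 (hMeetsRow 0 (ne_of_lt h0m))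
      (hMeetsRow 3 (ne_of_gt hm3))
  rw [hAeq] at hFull hFullRowm
  exact at_most_one_full e D.row_mono hdisj hI1 hI2 hA1r hA2r
    (Ne.symm hmne) hFull hFullRowm

open Classical in
lemma no_amm {t d : ℕ} (G : SimpleGraph V)
    (P : Fin (Fintype.card V) → Finpartition (Finset.univ : Finset V))
    (hCS : IsContractionSeq P) (hW : SeqWidthLE G P t)
    (e : Fin (Fintype.card V) ≃ V)
    (hInt : ∀ k, ∀ Q ∈ (P k).parts, IntervalF e Q)
    (hd : d = 4 * t + 4)
    (D : Division (Fintype.card V) (Fintype.card V) d)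
    (hMix : IsAlmostMixedMinor (adjMatrix G e) D) : False := by
  have hsym : ∀ a b, adjMatrix G e a b = adjMatrix G e b a := adjMatrix_symm G e
  have hd2 : 2 ≤ d := by omega
  have hNpos : 0 < Fintype.card V := by
    obtain ⟨a, _⟩ := D.row_surj ⟨0, by omega⟩
    exact lt_of_le_of_lt (Nat.zero_le _) a.2
  haveI : Nontrivial (Fin d) := Fin.nontrivial_iff_two_le.2 hd2
  -- each block has two distinct elements
  have hrow2 : ∀ i : Fin d, ∃ a a' : Fin (Fintype.card V),
      D.row a = i ∧ D.row a' = i ∧ a ≠ a' := by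
    intro i
    obtain ⟨j, hj⟩ := exists_ne i
    have hnv := (hMix i j (Ne.symm hj)).2
    unfold Vertical at hnv
    push_neg at hnv
    obtain ⟨c, hc, r, hr, r', hr', hne⟩ := hnv
    exact ⟨r, r', hr, hr', fun h => hne (by rw [h])⟩
  have hcol2 : ∀ j : Fin d, ∃ a a' : Fin (Fintype.card V),
      D.col a = j ∧ D.col a' = j ∧ a ≠ a' := by
    intro j
    obtain ⟨i, hi⟩ := exists_ne j
    have hnh := (hMix i j hi).1
    unfold Horizontal at hnh
    push_neg at hnh
    obtain ⟨r, hr, c, hc, c', hc', hne⟩ := hnh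
    exact ⟨c, c', hc, hc', fun h => hne (by rw [h])⟩
  -- first time some part contains a full block
  obtain ⟨k, hkspec, hkmin⟩ :
      ∃ k : ℕ, (k < Fintype.card V ∧ ∀ h : k < Fintype.card V,
          ∃ A ∈ (P ⟨k, h⟩).parts,
            (∃ i, FullB e D.row i A) ∨ (∃ j, FullB e D.col j A)) ∧
        ∀ j' : ℕ, j' < k → ¬ (j' < Fintype.card V ∧ ∀ h : j' < Fintype.card V,
          ∃ A ∈ (P ⟨j', h⟩).parts,
            (∃ i, FullB e D.row i A) ∨ (∃ j, FullB e D.col j A)) := by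
    have hQex : ∃ k : ℕ, k < Fintype.card V ∧ ∀ h : k < Fintype.card V,
        ∃ A ∈ (P ⟨k, h⟩).parts,
          (∃ i, FullB e D.row i A) ∨ (∃ j, FullB e D.col j A) := by
      refine ⟨Fintype.card V - 1, by omega, fun h => ?_⟩
      refine ⟨Finset.univ, ?_, Or.inl ⟨⟨0, by omega⟩, fun a _ => Finset.mem_univ _⟩⟩
      rw [hCS.2.2.1 hNpos]
      exact Finset.mem_singleton_self _
    exact ⟨Nat.find hQex, Nat.find_spec hQex, fun j' hj' => Nat.find_min hQex hj'⟩
  obtain ⟨hkN, hkbody⟩ := hkspec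
  obtain ⟨A, hAparts, hAfull⟩ := hkbody hkN
  -- k is positive
  have hkpos : 0 < k := by
    rcases Nat.eq_zero_or_pos k with h | h
    · exfalso
      subst h
      have hsing : ∀ W ∈ (P ⟨0, hkN⟩).parts, ∃ v : V, W = {v} := by
        intro W hW
        rw [hCS.2.1 hNpos] at hW
        obtain ⟨v, _, hv⟩ := Finset.mem_image.1 hW
        exact ⟨v, hv.symm⟩
      obtain ⟨v, hv⟩ := hsing A hAparts
      rcases hAfull with ⟨i, hFi⟩ | ⟨j, hFj⟩
      · obtain ⟨a, a', ha, ha', hne⟩ := hrow2 i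
        have h1 : e a = v := by
          have := hFi a ha; rw [hv] at this; exact Finset.mem_singleton.1 this
        have h2 : e a' = v := by
          have := hFi a' ha'; rw [hv] at this; exact Finset.mem_singleton.1 this
        exact hne (e.injective (h1.trans h2.symm))
      · obtain ⟨a, a', ha, ha', hne⟩ := hcol2 j
        have h1 : e a = v := by
          have := hFj a ha; rw [hv] at this; exact Finset.mem_singleton.1 this
        have h2 : e a' = v := by
          have := hFj a' ha'; rw [hv] at this; exact Finset.mem_singleton.1 this
        exact hne (e.injective (h1.trans h2.symm))
    · exact h
  -- merge structure at step k
  obtain ⟨A1, B1, hA1, hB1, hA1B1, hparts⟩ := hCS.2.2.2 (k - 1) (by omega)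
  have hfin : (⟨k - 1 + 1, by omega⟩ : Fin (Fintype.card V)) = ⟨k, hkN⟩ :=
    Fin.ext (show k - 1 + 1 = k by omega)
  rw [hfin] at hparts
  have hk1N : k - 1 < Fintype.card V := by omega
  -- no part at time k-1 has a full block
  have hnotprev : ∀ W ∈ (P ⟨k - 1, hk1N⟩).parts,
      (∀ i, ¬ FullB e D.row i W) ∧ (∀ j, ¬ FullB e D.col j W) := by
    intro W hW
    have hnb : ¬ ∃ A' ∈ (P ⟨k - 1, hk1N⟩).parts,
        (∃ i, FullB e D.row i A') ∨ (∃ j, FullB e D.col j A') := by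
      intro hbody
      exact hkmin (k - 1) (by omega) ⟨by omega, fun _ => hbody⟩
    constructor
    · intro i hFi
      exact hnb ⟨W, hW, Or.inl ⟨i, hFi⟩⟩
    · intro j hFj
      exact hnb ⟨W, hW, Or.inr ⟨j, hFj⟩⟩
  -- A must be the merged part
  have hAeq : A = A1 ∪ B1 := by
    by_contra hne
    have hAin : A ∈ insert (A1 ∪ B1) ((((P ⟨k - 1, hk1N⟩).parts).erase A1).erase B1) := by
      rw [← hparts]; exact hAparts
    rcases Finset.mem_insert.1 hAin with h | h
    · exact hne h
    · have hAprev : A ∈ (P ⟨k - 1, hk1N⟩).parts :=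
        Finset.mem_of_mem_erase (Finset.mem_of_mem_erase h)
      rcases hAfull with ⟨i, hFi⟩ | ⟨j, hFj⟩
      · exact (hnotprev A hAprev).1 i hFi
      · exact (hnotprev A hAprev).2 j hFj
  have hOther : ∀ B ∈ (P ⟨k, hkN⟩).parts, B ≠ A →
      (∀ i, ¬ FullB e D.row i B) ∧ (∀ j, ¬ FullB e D.col j B) := by
    intro B hB hBne
    have hBin : B ∈ insert (A1 ∪ B1) ((((P ⟨k - 1, hk1N⟩).parts).erase A1).erase B1) := by
      rw [← hparts]; exact hB
    rcases Finset.mem_insert.1 hBin with h | h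
    · exact absurd (h.trans hAeq.symm) hBne
    · exact hnotprev B (Finset.mem_of_mem_erase (Finset.mem_of_mem_erase h))
  have hdisj : Disjoint A1 B1 :=
    (P ⟨k - 1, hk1N⟩).disjoint (Finset.mem_coe.2 hA1) (Finset.mem_coe.2 hB1) hA1B1
  have hI1 : IntervalF e A1 := hInt _ A1 hA1
  have hI2 : IntervalF e B1 := hInt _ B1 hB1
  have hA1r := (hnotprev A1 hA1).1
  have hA1c := (hnotprev A1 hA1).2
  have hB1r := (hnotprev B1 hB1).1
  have hB1c := (hnotprev B1 hB1).2
  rcases hAfull with ⟨i0, hFi⟩ | ⟨j0, hFj⟩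
  · exact crux G e P hW hInt hd D hMix ⟨k, hkN⟩ hAparts hAeq hdisj hI1 hI2
      hA1r hA1c hB1r hB1c hOther hFi
  · -- transpose the division
    set D' : Division (Fintype.card V) (Fintype.card V) d :=
      ⟨D.col, D.row, D.col_mono, D.row_mono, D.col_surj, D.row_surj⟩ with hD'
    have hMix' : IsAlmostMixedMinor (adjMatrix G e) D' := by
      intro i j hij
      exact mixed_swap hsym (hMix j i (fun h2 => hij h2.symm))
    exact crux G e P hW hInt hd D' hMix' ⟨k, hkN⟩ hAparts hAeq hdisj hI1 hI2
      hA1c hA1r hB1c hB1r (fun B hB hne => ⟨(hOther B hB hne).2, (hOther B hB hne).1⟩) hFj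


end AuxB

/-- Let `t ω B : ℕ`. If every finite simple graph `H` with clique
number at most `ω` that admits, under some linear ordering of its vertices, a
`(4t+4)`-almost mixed-free adjacency matrix satisfies `χ(H) ≤ B`, then every finite
simple graph `G` with twin-width at most `t` and clique number at most `ω` satisfies
`χ(G) ≤ B`. -/
theorem tww_to_amfree (t ω B : ℕ)
    (h : ∀ (V : Type) [Fintype V] (H : SimpleGraph V),
      H.cliqueNum ≤ ω → AdmitsAMFree (4 * t + 4) H → H.chromaticNumber ≤ (B : ℕ∞)) :
    ∀ (V : Type) [Fintype V] [DecidableEq V] (G : SimpleGraph V),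
      TwinWidthLE G t → G.cliqueNum ≤ ω → G.chromaticNumber ≤ (B : ℕ∞) := by
  intro V _ _ G hTW hclq
  obtain ⟨P, hCS, hW⟩ := hTW
  refine h V G hclq ?_
  rcases Nat.eq_zero_or_pos (Fintype.card V) with h0 | h0
  · refine ⟨(Fintype.equivFin V).symm, ?_⟩
    rintro ⟨D, -⟩
    obtain ⟨a, -⟩ := D.row_surj ⟨0, by omega⟩
    have := a.2
    omega
  · obtain ⟨e, hInt⟩ := exists_interval_order hCS h0
    refine ⟨e, ?_⟩
    rintro ⟨D, hD⟩
    exact no_amm G P hCS hW e (fun k Q hQ a b c hab hbc ha hc => hInt k Q hQ a b c hab hbc ha hc)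
      rfl D hD

end TwPaper
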